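/- (Opial's lemma) Let H be a real Hilbert space, F ⊆ H nonempty, and (x_n) a sequence in H such that (1) for every u ∈ F the limit of ‖x_n − u‖ as n → ∞ exists, and (2) every weak cluster point of (x_n) belongs to F. Then (x_n) converges weakly to some x* ∈ F. -/

import Mathlib

open RealInnerProductSpace Filter Topology

/-- `p` is a weak cluster point of the sequence `x`. -/
def WeakClusterPt {H : Type*} [NormedAddCommGroup H] [InnerProductSpace ℝ H]
    (x : ℕ → H) (p : H) : Prop :=
  ∃ φ : ℕ → ℕ, StrictMono φ ∧
    ∀ y : H, Tendsto (fun n => ⟪x (φ n), y⟫) atTop (𝓝 ⟪p, y⟫)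

section Aux

variable {H : Type*} [NormedAddCommGroup H] [InnerProductSpace ℝ H] [CompleteSpace H]

/-- If a sequence of inner products is Cauchy against vectors approximating `y`, it is Cauchy
against `y`. -/
lemma cauchy_inner_of_approx (x : ℕ → H) (M : ℝ) (hM : ∀ n, ‖x n‖ ≤ M) (y : H)
    (hy : ∀ ε > (0:ℝ), ∃ z : H, ‖y - z‖ < ε ∧ CauchySeq (fun n => ⟪x n, z⟫)) :
    CauchySeq (fun n => ⟪x n, y⟫) := by
  have hM0 : 0 ≤ M := le_trans (norm_nonneg _) (hM 0)
  rw [Metric.cauchySeq_iff]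
  intro ε hε
  obtain ⟨z, hz, hzc⟩ := hy (ε / (3 * (M + 1))) (by positivity)
  rw [Metric.cauchySeq_iff] at hzc
  obtain ⟨N, hN⟩ := hzc (ε / 3) (by positivity)
  refine ⟨N, fun m hm n hn => ?_⟩
  have key : ∀ k, |⟪x k, y⟫ - ⟪x k, z⟫| ≤ ε / 3 := by
    intro k
    have h1 : |⟪x k, y - z⟫| ≤ ‖x k‖ * ‖y - z‖ := abs_real_inner_le_norm _ _
    have h2 : ‖x k‖ * ‖y - z‖ ≤ M * (ε / (3 * (M + 1))) :=
      mul_le_mul (hM k) hz.le (norm_nonneg _) hM0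
    have h3 : M * (ε / (3 * (M + 1))) ≤ ε / 3 := by
      have h4 : M * (ε / (3 * (M + 1))) = M * ε / (3 * (M + 1)) := by ring
      rw [h4, div_le_div_iff₀ (by positivity) (by norm_num : (0:ℝ) < 3)]
      nlinarith
    rw [← inner_sub_right]
    linarith
  have hmn : |⟪x m, z⟫ - ⟪x n, z⟫| < ε / 3 := by
    have := hN m hm n hn
    rwa [Real.dist_eq] at this
  have hy1 := key m
  have hy2 := key n
  rw [Real.dist_eq]
  have : ⟪x m, y⟫ - ⟪x n, y⟫ =
      (⟪x m, y⟫ - ⟪x m, z⟫) + (⟪x m, z⟫ - ⟪x n, z⟫) + (⟪x n, z⟫ - ⟪x n, y⟫) := by ring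
  rw [this]
  calc |(⟪x m, y⟫ - ⟪x m, z⟫) + (⟪x m, z⟫ - ⟪x n, z⟫) + (⟪x n, z⟫ - ⟪x n, y⟫)|
      ≤ |(⟪x m, y⟫ - ⟪x m, z⟫) + (⟪x m, z⟫ - ⟪x n, z⟫)| + |⟪x n, z⟫ - ⟪x n, y⟫| := abs_add_le _ _
    _ ≤ |⟪x m, y⟫ - ⟪x m, z⟫| + |⟪x m, z⟫ - ⟪x n, z⟫| + |⟪x n, z⟫ - ⟪x n, y⟫| := by
        have := abs_add_le (⟪x m, y⟫ - ⟪x m, z⟫) (⟪x m, z⟫ - ⟪x n, z⟫)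
        linarith
    _ < ε := by
        have h6 : |⟪x n, z⟫ - ⟪x n, y⟫| = |⟪x n, y⟫ - ⟪x n, z⟫| := abs_sub_comm _ _
        rw [h6]
        linarith

/-- A bounded sequence in a real Hilbert space has a weakly convergent subsequence. -/
lemma exists_weak_subseq (x : ℕ → H) (M : ℝ) (hM : ∀ n, ‖x n‖ ≤ M) :
    ∃ p : H, ∃ φ : ℕ → ℕ, StrictMono φ ∧
      ∀ y : H, Tendsto (fun n => ⟪x (φ n), y⟫) atTop (𝓝 ⟪p, y⟫) := by
  have hM0 : 0 ≤ M := le_trans (norm_nonneg _) (hM 0)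
  -- diagonal subsequence via compactness of product of intervals
  have hcomp : IsCompact (Set.univ.pi fun m : ℕ => Set.Icc (-(M * ‖x m‖)) (M * ‖x m‖)) :=
    isCompact_univ_pi fun m => isCompact_Icc
  have hg : ∀ n, (fun m => (⟪x n, x m⟫ : ℝ)) ∈
      (Set.univ.pi fun m : ℕ => Set.Icc (-(M * ‖x m‖)) (M * ‖x m‖)) := by
    intro n
    rw [Set.mem_univ_pi]
    intro m
    rw [Set.mem_Icc, ← abs_le]
    calc |⟪x n, x m⟫| ≤ ‖x n‖ * ‖x m‖ := abs_real_inner_le_norm _ _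
      _ ≤ M * ‖x m‖ := mul_le_mul_of_nonneg_right (hM n) (norm_nonneg _)
  obtain ⟨a, -, φ, hφ, hconv⟩ := hcomp.tendsto_subseq hg
  have hconv' : ∀ m, Tendsto (fun n => ⟪x (φ n), x m⟫) atTop (𝓝 (a m)) := by
    rw [tendsto_pi_nhds] at hconv
    exact fun m => hconv m
  -- the set of y against which the subsequence's inner products are Cauchy
  let S : Submodule ℝ H :=
    { carrier := {y : H | CauchySeq fun n => ⟪x (φ n), y⟫}
      add_mem' := by
        intro u v hu hv
        simp only [Set.mem_setOf_eq, inner_add_right] at *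
        exact hu.add hv
      zero_mem' := by
        simp only [Set.mem_setOf_eq, inner_zero_right]
        exact cauchySeq_const 0
      smul_mem' := by
        intro c u hu
        simp only [Set.mem_setOf_eq, real_inner_smul_right] at *
        obtain ⟨L, hL⟩ := cauchySeq_tendsto_of_complete hu
        exact (hL.const_mul c).cauchySeq }
  have hxS : ∀ m, x m ∈ S := fun m => (hconv' m).cauchySeq
  have hspan : Submodule.span ℝ (Set.range x) ≤ S := by
    rw [Submodule.span_le]
    rintro - ⟨m, rfl⟩
    exact hxS m
  -- every point of the closure is also good
  have hclos : ∀ y ∈ closure (Submodule.span ℝ (Set.range x) : Set H),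
      CauchySeq fun n => ⟪x (φ n), y⟫ := by
    intro y hy
    refine cauchy_inner_of_approx (fun n => x (φ n)) M (fun n => hM _) y ?_
    intro ε hε
    rw [Metric.mem_closure_iff] at hy
    obtain ⟨z, hzmem, hzd⟩ := hy ε hε
    rw [dist_eq_norm] at hzd
    exact ⟨z, hzd, hspan hzmem⟩
  -- decompose arbitrary y using the projection on the closed span
  set K : Submodule ℝ H := (Submodule.span ℝ (Set.range x)).topologicalClosure with hK
  haveI : CompleteSpace K :=
    (Submodule.isClosed_topologicalClosure _).completeSpace_coe
  have hxK : ∀ n, x n ∈ K :=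
    fun n => Submodule.le_topologicalClosure _ (Submodule.subset_span ⟨n, rfl⟩)
  have hC : ∀ y : H, CauchySeq fun n => ⟪x (φ n), y⟫ := by
    intro y
    have horth : ∀ n, ⟪x (φ n), y⟫ = ⟪x (φ n), (K.orthogonalProjectionOnto y : H)⟫ := by
      intro n
      have h0 : ⟪y - (K.orthogonalProjectionOnto y : H), x (φ n)⟫ = 0 :=
        Submodule.starProjection_inner_eq_zero (K := K) y (x (φ n)) (hxK (φ n))
      have h0' : ⟪x (φ n), y - (K.orthogonalProjectionOnto y : H)⟫ = 0 := by
        rw [real_inner_comm]; exact h0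
      rw [inner_sub_right] at h0'
      linarith
    simp only [horth]
    apply hclos
    exact (K.orthogonalProjectionOnto y).2
  have hL : ∀ y : H, ∃ L : ℝ, Tendsto (fun n => ⟪x (φ n), y⟫) atTop (𝓝 L) :=
    fun y => cauchySeq_tendsto_of_complete (hC y)
  choose g hgL using hL
  -- g is linear and bounded
  have hadd : ∀ u v : H, g (u + v) = g u + g v := by
    intro u v
    refine tendsto_nhds_unique (hgL (u + v)) ?_
    have := (hgL u).add (hgL v)
    simpa only [inner_add_right] using this
  have hsmul : ∀ (c : ℝ) (u : H), g (c • u) = c * g u := by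
    intro c u
    refine tendsto_nhds_unique (hgL (c • u)) ?_
    have := (hgL u).const_mul c
    simpa only [real_inner_smul_right] using this
  have hbound : ∀ y : H, ‖g y‖ ≤ M * ‖y‖ := by
    intro y
    have h1 : Tendsto (fun n => |⟪x (φ n), y⟫|) atTop (𝓝 |g y|) := (hgL y).abs
    have h2 : ∀ n, |⟪x (φ n), y⟫| ≤ M * ‖y‖ := by
      intro n
      calc |⟪x (φ n), y⟫| ≤ ‖x (φ n)‖ * ‖y‖ := abs_real_inner_le_norm _ _
        _ ≤ M * ‖y‖ := mul_le_mul_of_nonneg_right (hM _) (norm_nonneg _)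
    have := le_of_tendsto h1 (Eventually.of_forall h2)
    simpa [Real.norm_eq_abs] using this
  let f : H →L[ℝ] ℝ :=
    LinearMap.mkContinuous
      { toFun := g
        map_add' := hadd
        map_smul' := by intro c u; simpa using hsmul c u } M hbound
  refine ⟨(InnerProductSpace.toDual ℝ H).symm f, φ, hφ, fun y => ?_⟩
  rw [InnerProductSpace.toDual_symm_apply]
  exact hgL y

end Aux

/-- Opial's lemma: if `‖x_n − u‖` converges for every `u ∈ F` and every
weak cluster point of `(x_n)` lies in `F`, then `(x_n)` converges weakly to a point of `F`. -/
theorem stmt13 {H : Type*} [NormedAddCommGroup H] [InnerProductSpace ℝ H] [CompleteSpace H]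
    (F : Set H) (hF : F.Nonempty) (x : ℕ → H)
    (h1 : ∀ u ∈ F, ∃ l : ℝ, Tendsto (fun n => ‖x n - u‖) atTop (𝓝 l))
    (h2 : ∀ p : H, WeakClusterPt x p → p ∈ F) :
    ∃ xstar ∈ F, ∀ y : H, Tendsto (fun n => ⟪x n, y⟫) atTop (𝓝 ⟪xstar, y⟫) := by
  -- the sequence is bounded
  obtain ⟨u, hu⟩ := hF
  obtain ⟨l, hl⟩ := h1 u hu
  have hbdd : ∃ M : ℝ, ∀ n, ‖x n‖ ≤ M := by
    obtain ⟨C, hC⟩ := hl.bddAbove_range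
    refine ⟨C + ‖u‖, fun n => ?_⟩
    have h : ‖x n - u‖ ≤ C := hC ⟨n, rfl⟩
    calc ‖x n‖ = ‖(x n - u) + u‖ := by rw [sub_add_cancel]
      _ ≤ ‖x n - u‖ + ‖u‖ := norm_add_le _ _
      _ ≤ C + ‖u‖ := by linarith
  obtain ⟨M, hM⟩ := hbdd
  -- existence of a weak cluster point
  obtain ⟨p, φ, hφ, hφc⟩ := exists_weak_subseq x M hM
  have hpF : p ∈ F := h2 p ⟨φ, hφ, hφc⟩
  -- uniqueness of weak cluster points
  have huniq : ∀ q : H, WeakClusterPt x q → q = p := by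
    intro q hq
    have hqF : q ∈ F := h2 q hq
    obtain ⟨ψ, hψ, hψc⟩ := hq
    obtain ⟨b, hb⟩ := h1 q hqF
    obtain ⟨c, hc⟩ := h1 p hpF
    -- the difference of squared distances converges
    have hd : ∀ n, ‖x n - p‖ ^ 2 - ‖x n - q‖ ^ 2
        = (‖p‖ ^ 2 - ‖q‖ ^ 2) - 2 * ⟪x n, p - q⟫ := by
      intro n
      have e1 : ‖x n - p‖ ^ 2 = ‖x n‖ ^ 2 - 2 * ⟪x n, p⟫ + ‖p‖ ^ 2 :=
        norm_sub_sq_real _ _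
      have e2 : ‖x n - q‖ ^ 2 = ‖x n‖ ^ 2 - 2 * ⟪x n, q⟫ + ‖q‖ ^ 2 :=
        norm_sub_sq_real _ _
      rw [e1, e2, inner_sub_right]
      ring
    have hdlim : Tendsto (fun n => ‖x n - p‖ ^ 2 - ‖x n - q‖ ^ 2) atTop
        (𝓝 (c ^ 2 - b ^ 2)) := (hc.pow 2).sub (hb.pow 2)
    have hφtop : Tendsto φ atTop atTop := hφ.tendsto_atTop
    have hψtop : Tendsto ψ atTop atTop := hψ.tendsto_atTop
    -- limit along φ
    have lim1 : Tendsto (fun n => ‖x (φ n) - p‖ ^ 2 - ‖x (φ n) - q‖ ^ 2) atTop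
        (𝓝 ((‖p‖ ^ 2 - ‖q‖ ^ 2) - 2 * ⟪p, p - q⟫)) := by
      simp only [hd]
      exact (tendsto_const_nhds.sub ((hφc (p - q)).const_mul 2))
    have lim1' : Tendsto (fun n => ‖x (φ n) - p‖ ^ 2 - ‖x (φ n) - q‖ ^ 2) atTop
        (𝓝 (c ^ 2 - b ^ 2)) := hdlim.comp hφtop
    have eq1 : c ^ 2 - b ^ 2 = (‖p‖ ^ 2 - ‖q‖ ^ 2) - 2 * ⟪p, p - q⟫ :=
      tendsto_nhds_unique lim1' lim1
    have lim2 : Tendsto (fun n => ‖x (ψ n) - p‖ ^ 2 - ‖x (ψ n) - q‖ ^ 2) atTop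
        (𝓝 ((‖p‖ ^ 2 - ‖q‖ ^ 2) - 2 * ⟪q, p - q⟫)) := by
      simp only [hd]
      exact (tendsto_const_nhds.sub ((hψc (p - q)).const_mul 2))
    have lim2' : Tendsto (fun n => ‖x (ψ n) - p‖ ^ 2 - ‖x (ψ n) - q‖ ^ 2) atTop
        (𝓝 (c ^ 2 - b ^ 2)) := hdlim.comp hψtop
    have eq2 : c ^ 2 - b ^ 2 = (‖p‖ ^ 2 - ‖q‖ ^ 2) - 2 * ⟪q, p - q⟫ :=
      tendsto_nhds_unique lim2' lim2
    have : ⟪p, p - q⟫ = ⟪q, p - q⟫ := by linarith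
    have h0 : ⟪p - q, p - q⟫ = (0 : ℝ) := by
      rw [inner_sub_left]; linarith
    have := inner_self_eq_zero.mp h0
    rw [sub_eq_zero] at this
    exact this.symm ▸ rfl
  -- from uniqueness to weak convergence of the whole sequence
  refine ⟨p, hpF, fun y => ?_⟩
  by_contra hcon
  -- extract a subsequence staying away from the limit
  rw [Metric.tendsto_atTop] at hcon
  push_neg at hcon
  obtain ⟨ε, hε, hfreq⟩ := hcon
  have hfreq' : ∀ N : ℕ, ∃ n ≥ N, ε ≤ dist ⟪x n, y⟫ ⟪p, y⟫ := hfreq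
  choose v hv1 hv2 using hfreq'
  have hfreq'' : ∃ᶠ n in atTop, ε ≤ dist ⟪x n, y⟫ ⟪p, y⟫ := by
    rw [frequently_atTop]
    exact fun N => ⟨v N, hv1 N, hv2 N⟩
  obtain ⟨ψ, hψ, hψprop⟩ := extraction_of_frequently_atTop hfreq''
  -- the subsequence has a weak cluster point, which must be p: contradiction
  obtain ⟨q, ρ, hρ, hρc⟩ := exists_weak_subseq (fun n => x (ψ n)) M (fun n => hM _)
  have hqclu : WeakClusterPt x q := ⟨ψ ∘ ρ, hψ.comp hρ, fun z => hρc z⟩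
  have hqp : q = p := huniq q hqclu
  have hlim : Tendsto (fun n => ⟪x (ψ (ρ n)), y⟫) atTop (𝓝 ⟪p, y⟫) := hqp ▸ hρc y
  have hlimd : Tendsto (fun n => dist ⟪x (ψ (ρ n)), y⟫ ⟪p, y⟫) atTop (𝓝 0) := by
    rw [tendsto_iff_dist_tendsto_zero] at hlim
    exact hlim
  have : ∀ n, ε ≤ dist ⟪x (ψ (ρ n)), y⟫ ⟪p, y⟫ := fun n => hψprop (ρ n)
  have := le_of_tendsto_of_tendsto' tendsto_const_nhds hlimd this
  linarith
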